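/- arXiv:2212.00578 — 3 statements merged into one kernel-verified Lean document; each statement's English description precedes it below -/
import Mathlib

section
/- With s : (−x_u, x_q) → ℝ continuous and strictly decreasing, the critical prejudice τ^d defined by s(τ^d) = β = (x_u + c)/(x_q + x_u), and regret u(τ) = s(τ)(x_q + x_u) − x_u − 1{s(τ)(x_q+x_u) − x_u > c}·x for x ∈ {x_q, −x_u}: u is locally decreasing at every τ ≠ τ^d and has a jump discontinuity at τ^d. -/
open Set Filter Topology

/-- For `s` continuous strictly decreasing on `(−x_u,x_q)`, with critical
prejudice `τᵈ` where `s τᵈ = (x_u+c)/(x_q+x_u)` and regret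
`u τ = s τ (x_q+x_u) − x_u − 1{s τ (x_q+x_u) − x_u > c} x`: `u` is locally decreasing at
every `τ ≠ τᵈ` in the domain and has a jump discontinuity at `τᵈ`
(left limit `c − x`, right limit `c`, with `x ≠ 0`). -/
theorem regret_locally_decreasing_s2
    (x_q x_u c x : ℝ) (hxq : 0 < x_q) (hxu : 0 < x_u)
    (hc : c ∈ Ioo (-x_u) x_q) (hx : x = x_q ∨ x = -x_u)
    (s : ℝ → ℝ)
    (hscont : ContinuousOn s (Ioo (-x_u) x_q))
    (hsanti : StrictAntiOn s (Ioo (-x_u) x_q))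
    (τd : ℝ) (hτd : τd ∈ Ioo (-x_u) x_q)
    (hcrit : s τd = (x_u + c) / (x_q + x_u))
    (u : ℝ → ℝ)
    (hu : ∀ τ, u τ = (s τ * (x_q + x_u) - x_u) -
      (if s τ * (x_q + x_u) - x_u > c then (1 : ℝ) else 0) * x) :
    (∀ τ ∈ Ioo (-x_u) x_q, τ ≠ τd →
      ∃ δ > 0, Ioo (τ - δ) (τ + δ) ⊆ Ioo (-x_u) x_q ∧
        StrictAntiOn u (Ioo (τ - δ) (τ + δ))) ∧
    Tendsto u (𝓝[<] τd) (𝓝 (c - x)) ∧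
    Tendsto u (𝓝[>] τd) (𝓝 c) ∧
    x ≠ 0 := by
  have hS : (0:ℝ) < x_q + x_u := by linarith
  have hNc : s τd * (x_q + x_u) - x_u = c := by
    rw [hcrit]; field_simp; ring
  have hlt : ∀ σ ∈ Ioo (-x_u) x_q, σ < τd → c < s σ * (x_q + x_u) - x_u := by
    intro σ hσ h
    have := hsanti hσ hτd h
    nlinarith
  have hgt : ∀ σ ∈ Ioo (-x_u) x_q, τd < σ → s σ * (x_q + x_u) - x_u < c := by
    intro σ hσ h
    have := hsanti hτd hσ h
    nlinarith
  have hxne : x ≠ 0 := by rcases hx with h | h <;> subst h <;> intro h0 <;> linarith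
  have hmemnhds : Ioo (-x_u) x_q ∈ 𝓝 τd := Ioo_mem_nhds hτd.1 hτd.2
  have hscA : ContinuousAt s τd := hscont.continuousAt hmemnhds
  have hNtends : Tendsto (fun σ => s σ * (x_q + x_u) - x_u) (𝓝 τd) (𝓝 c) := by
    rw [← hNc]
    exact ((hscA.mul continuousAt_const).sub continuousAt_const).tendsto
  refine ⟨?_, ?_, ?_, hxne⟩
  · intro τ hτ hne
    obtain ⟨h1, h2⟩ := hτ
    set δ := min (min (τ + x_u) (x_q - τ)) |τ - τd| with hδ
    have hd1 : δ ≤ τ + x_u := le_trans (min_le_left _ _) (min_le_left _ _)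
    have hd2 : δ ≤ x_q - τ := le_trans (min_le_left _ _) (min_le_right _ _)
    have hd3 : δ ≤ |τ - τd| := min_le_right _ _
    have hδpos : 0 < δ := by
      have habs : 0 < |τ - τd| := abs_pos.mpr (sub_ne_zero.mpr hne)
      simp only [hδ, lt_min_iff]
      exact ⟨⟨by linarith, by linarith⟩, habs⟩
    have hsub : Ioo (τ - δ) (τ + δ) ⊆ Ioo (-x_u) x_q := by
      intro σ hσ
      exact ⟨by linarith [hσ.1], by linarith [hσ.2]⟩
    refine ⟨δ, hδpos, hsub, ?_⟩
    intro a ha b hb hab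
    have haD := hsub ha
    have hbD := hsub hb
    have hN : s b * (x_q + x_u) - x_u < s a * (x_q + x_u) - x_u := by
      have := hsanti haD hbD hab
      nlinarith
    rcases lt_or_gt_of_ne hne with hlt' | hgt'
    · -- τ < τd : whole interval is left of τd
      have habs : |τ - τd| = τd - τ := by rw [abs_of_nonpos (by linarith)]; ring
      have haτ : a < τd := by have := ha.2; rw [habs] at hd3; linarith
      have hbτ : b < τd := by have := hb.2; rw [habs] at hd3; linarith
      rw [hu a, hu b, if_pos (hlt a haD haτ), if_pos (hlt b hbD hbτ)]
      linarith
    · -- τ > τd : whole interval is right of τd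
      have habs : |τ - τd| = τ - τd := abs_of_nonneg (by linarith)
      have haτ : τd < a := by have := ha.1; rw [habs] at hd3; linarith
      have hbτ : τd < b := by have := hb.1; rw [habs] at hd3; linarith
      rw [hu a, hu b, if_neg (not_lt.mpr (le_of_lt (hgt a haD haτ))),
        if_neg (not_lt.mpr (le_of_lt (hgt b hbD hbτ)))]
      linarith
  · -- left limit c - x
    have heq : u =ᶠ[𝓝[<] τd] fun σ => s σ * (x_q + x_u) - x_u - x := by
      filter_upwards [mem_nhdsWithin_of_mem_nhds hmemnhds,
        self_mem_nhdsWithin] with σ hσD hσlt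
      rw [hu σ, if_pos (hlt σ hσD hσlt)]; ring
    refine Tendsto.congr' heq.symm ?_
    have : Tendsto (fun σ => s σ * (x_q + x_u) - x_u - x) (𝓝 τd) (𝓝 (c - x)) :=
      hNtends.sub tendsto_const_nhds
    exact this.mono_left nhdsWithin_le_nhds
  · -- right limit c
    have heq : u =ᶠ[𝓝[>] τd] fun σ => s σ * (x_q + x_u) - x_u := by
      filter_upwards [mem_nhdsWithin_of_mem_nhds hmemnhds,
        self_mem_nhdsWithin] with σ hσD hσgt
      rw [hu σ, if_neg (not_lt.mpr (le_of_lt (hgt σ hσD hσgt)))]; ring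
    exact Tendsto.congr' heq.symm (hNtends.mono_left nhdsWithin_le_nhds)
end

section
/- Under the same hypotheses (s₁ continuous strictly increasing, s₂ continuous strictly decreasing, unique crossing at τ* with common value s*, and s₁(τ₁^d) = s₂(τ₂^d) = β with τ₁^d, τ₂^d in the domain), s* < β if and only if τ₁^d > τ₂^d. -/
open Set

/-- Under the same hypotheses as the critical-prejudice comparison,
`s* < β ↔ τ₁ᵈ > τ₂ᵈ`. -/
theorem critical_prejudice_order_iff
    (x_q x_u β : ℝ) (hxq : 0 < x_q) (hxu : 0 < x_u) (hβ : β ∈ Ioo (0 : ℝ) 1)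
    (s₁ s₂ : ℝ → ℝ)
    (hs₁mono : StrictMonoOn s₁ (Ioo (-x_u) x_q))
    (hs₂anti : StrictAntiOn s₂ (Ioo (-x_u) x_q))
    (τstar sstar : ℝ) (hτstar : τstar ∈ Ioo (-x_u) x_q)
    (h₁star : s₁ τstar = sstar) (h₂star : s₂ τstar = sstar)
    (τ₁d τ₂d : ℝ) (hτ₁d : τ₁d ∈ Ioo (-x_u) x_q) (hτ₂d : τ₂d ∈ Ioo (-x_u) x_q)
    (h₁d : s₁ τ₁d = β) (h₂d : s₂ τ₂d = β) :
    sstar < β ↔ τ₁d > τ₂d := by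
  constructor
  · intro h
    have h1 : τstar < τ₁d := by
      by_contra hle
      push_neg at hle
      have := hs₁mono.le_iff_le hτ₁d hτstar |>.mpr hle
      rw [h₁d, h₁star] at this
      linarith
    have h2 : τ₂d < τstar := by
      by_contra hle
      push_neg at hle
      have := hs₂anti.le_iff_ge hτ₂d hτstar |>.mpr hle
      rw [h₂d, h₂star] at this
      linarith
    linarith
  · intro h
    rcases lt_or_ge τstar τ₁d with hlt | hge
    · have := hs₁mono hτstar hτ₁d hlt
      rw [h₁star, h₁d] at this; exact this
    · have h2 : τ₂d < τstar := lt_of_lt_of_le h hge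
      have := hs₂anti hτ₂d hτstar h2
      rw [h₂star, h₂d] at this; exact this
end

section
/- At the equalizing prejudice τ*, the one-sided limits of regret coincide across algorithms: lim_{τ→τ*⁺} u(s₁(τ)) = lim_{τ→τ*⁻} u(s₂(τ)), where u(s) = s(x_q+x_u) − x_u − 1{s(x_q+x_u) − x_u > c}·x with x ∈ {x_q, −x_u} fixed. -/
open Set Filter Topology

/-- At the equalizing prejudice `τ*`, the one-sided limits of regret coincide
across the two algorithms: `lim_{τ→τ*⁺} u (s₁ τ) = lim_{τ→τ*⁻} u (s₂ τ)`, where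
`u s = s(x_q+x_u) − x_u − 1{s(x_q+x_u) − x_u > c} x`. -/
theorem regret_one_sided_limits_match
    (x_q x_u c x : ℝ) (hxq : 0 < x_q) (hxu : 0 < x_u)
    (hc : c ∈ Ioo (-x_u) x_q) (hx : x = x_q ∨ x = -x_u)
    (s₁ s₂ : ℝ → ℝ)
    (hs₁cont : ContinuousOn s₁ (Ioo (-x_u) x_q))
    (hs₂cont : ContinuousOn s₂ (Ioo (-x_u) x_q))
    (hs₁mono : StrictMonoOn s₁ (Ioo (-x_u) x_q))
    (hs₂anti : StrictAntiOn s₂ (Ioo (-x_u) x_q))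
    (τstar : ℝ) (hτstar : τstar ∈ Ioo (-x_u) x_q)
    (hcross : s₁ τstar = s₂ τstar)
    (u : ℝ → ℝ)
    (hu : ∀ s, u s = (s * (x_q + x_u) - x_u) -
      (if s * (x_q + x_u) - x_u > c then (1 : ℝ) else 0) * x) :
    ∃ l : ℝ, Tendsto (fun τ => u (s₁ τ)) (𝓝[>] τstar) (𝓝 l) ∧
      Tendsto (fun τ => u (s₂ τ)) (𝓝[<] τstar) (𝓝 l) := by
  have hA : 0 < x_q + x_u := by linarith
  set sstar : ℝ := s₁ τstar with hsstar
  set K : ℝ := if c ≤ sstar * (x_q + x_u) - x_u then x else 0 with hKdef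
  set l : ℝ := sstar * (x_q + x_u) - x_u - K with hl
  -- the affine function tends to l along 𝓝[>] sstar
  have hbase : Tendsto (fun s : ℝ => s * (x_q + x_u) - x_u - K) (𝓝[>] sstar) (𝓝 l) := by
    have : Continuous (fun s : ℝ => s * (x_q + x_u) - x_u - K) := by continuity
    exact (this.tendsto sstar).mono_left nhdsWithin_le_nhds
  have hlin : Tendsto (fun s : ℝ => s * (x_q + x_u) - x_u) (𝓝 sstar)
      (𝓝 (sstar * (x_q + x_u) - x_u)) := by
    exact (Continuous.tendsto (by continuity) sstar)
  -- u agrees with the affine function eventually on 𝓝[>] sstar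
  have heq : (fun s : ℝ => s * (x_q + x_u) - x_u - K) =ᶠ[𝓝[>] sstar] u := by
    rcases lt_trichotomy c (sstar * (x_q + x_u) - x_u) with hcase | hcase | hcase
    · have hev : ∀ᶠ s in 𝓝 sstar, c < s * (x_q + x_u) - x_u :=
        hlin.eventually (eventually_gt_nhds hcase)
      filter_upwards [nhdsWithin_le_nhds hev] with s hs
      rw [hu s, if_pos hs, hKdef, if_pos hcase.le]; ring
    · filter_upwards [self_mem_nhdsWithin] with s hs
      have : c < s * (x_q + x_u) - x_u := by
        have : sstar * (x_q + x_u) < s * (x_q + x_u) :=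
          mul_lt_mul_of_pos_right hs hA
        linarith
      rw [hu s, if_pos this, hKdef, if_pos hcase.le]; ring
    · have hev : ∀ᶠ s in 𝓝 sstar, s * (x_q + x_u) - x_u < c :=
        hlin.eventually (eventually_lt_nhds hcase)
      filter_upwards [nhdsWithin_le_nhds hev] with s hs
      rw [hu s, if_neg (not_lt.2 hs.le), hKdef, if_neg (not_le.2 hcase)]; ring
  have hu_lim : Tendsto u (𝓝[>] sstar) (𝓝 l) := hbase.congr' heq
  have hmem : Ioo (-x_u) x_q ∈ 𝓝 τstar := isOpen_Ioo.mem_nhds hτstar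
  -- s₁ tends to sstar from above on the right
  have h1 : Tendsto s₁ (𝓝[>] τstar) (𝓝[>] sstar) := by
    rw [tendsto_nhdsWithin_iff]
    constructor
    · exact (hs₁cont.continuousWithinAt hτstar).mono_left
        (nhdsWithin_le_iff.2 (mem_nhdsWithin_of_mem_nhds hmem))
    · filter_upwards [mem_nhdsWithin_of_mem_nhds hmem, self_mem_nhdsWithin] with τ hτ hτ'
      exact hs₁mono hτstar hτ hτ'
  -- s₂ tends to sstar from above on the left
  have h2 : Tendsto s₂ (𝓝[<] τstar) (𝓝[>] sstar) := by
    rw [tendsto_nhdsWithin_iff]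
    constructor
    · have : Tendsto s₂ (𝓝[<] τstar) (𝓝 (s₂ τstar)) :=
        (hs₂cont.continuousWithinAt hτstar).mono_left
          (nhdsWithin_le_iff.2 (mem_nhdsWithin_of_mem_nhds hmem))
      rwa [← hcross] at this
    · filter_upwards [mem_nhdsWithin_of_mem_nhds hmem, self_mem_nhdsWithin] with τ hτ hτ'
      exact hcross.trans_lt (hs₂anti hτ hτstar hτ')
  exact ⟨l, hu_lim.comp h1, hu_lim.comp h2⟩
end
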